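/- arXiv:1402.2500 — 3 statements merged into one kernel-verified Lean document; each statement's English description precedes it below -/
import Mathlib

section
/- Let (W,S) be a Coxeter system with reflection set T and length function ℓ. Let w = t1⋯tn be a minimal-length factorization of w ∈ W into reflections, and let x ∈ W. Then there is a factorization w = t1'⋯tn' in the Hurwitz orbit of (t1,…,tn) and an integer 0 ≤ i ≤ n such that along the sequence x, xt1', xt1't2', …, xt1'⋯tn' = xw the S-length ℓ strictly decreases for the first i steps and strictly increases for the remaining n − i steps. In particular, when x = e one has i = 0, so there is a factorization w = t1'⋯tn' in the Hurwitz orbit of (t1,…,tn) with ℓ(t1'⋯t_{k}') < ℓ(t1'⋯t_{k+1}') for all 0 ≤ k < n. -/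
/-- The Hurwitz move `σᵢ` on tuples of group elements (represented as lists):
`(t₁, …, a, b, …, tₙ) ↦ (t₁, …, a b a, a, …, tₙ)` (recall that reflections are
involutions, so `a b a = a b a⁻¹`). -/
def HurwitzMove {W : Type*} [Group W] (l l' : List W) : Prop :=
  ∃ (l₁ l₂ : List W) (a b : W),
    l = l₁ ++ [a, b] ++ l₂ ∧ l' = l₁ ++ [a * b * a, a] ++ l₂

/-- The reflection length `ℓ_T` of `w`: the minimal length of a factorization of `w`
into reflections. -/
noncomputable def reflLength {B : Type*} {W : Type*} [Group W] {M : CoxeterMatrix B}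
    (cs : CoxeterSystem M W) (w : W) : ℕ :=
  sInf {n | ∃ l : List W, (∀ t ∈ l, cs.IsReflection t) ∧ l.prod = w ∧ l.length = n}

open scoped Classical

namespace HurwitzAux

open CoxeterSystem Finset

variable {B : Type*} {W : Type*} [Group W] {M : CoxeterMatrix B}

noncomputable def muFun (cs : CoxeterSystem M W) (i : B) : W × ℤˣ → W × ℤˣ :=
  fun x => (cs.simple i * x.1 * cs.simple i,
    if x.1 = cs.simple i then -x.2 else x.2)

lemma muFun_involutive (cs : CoxeterSystem M W) (i : B) :
    Function.Involutive (muFun cs i) := by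
  rintro ⟨t, ε⟩
  simp only [muFun]
  have h1 : cs.simple i * (cs.simple i * t * cs.simple i) * cs.simple i = t := by
    simp [mul_assoc, cs.simple_mul_simple_cancel_left]
  have h2 : (cs.simple i * t * cs.simple i = cs.simple i) ↔ t = cs.simple i := by
    constructor
    · intro h
      have := congrArg (fun z => cs.simple i * z * cs.simple i) h
      simpa [mul_assoc, cs.simple_mul_simple_cancel_left] using this
    · intro h; simp [h, cs.simple_mul_simple_cancel_left]
  by_cases ht : t = cs.simple i
  · simp [ht, h2, h1]
  · simp [ht, h2, h1]

noncomputable def muPerm (cs : CoxeterSystem M W) (i : B) : Equiv.Perm (W × ℤˣ) :=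
  Function.Involutive.toPerm _ (muFun_involutive cs i)

lemma muPerm_apply (cs : CoxeterSystem M W) (i : B) (x : W × ℤˣ) :
    muPerm cs i x = muFun cs i x := rfl

/-- sign contribution of one `μ_i ∘ μ_j` step -/
noncomputable def chi (cs : CoxeterSystem M W) (i j : B) (t : W) : ℤˣ :=
  (if t = cs.simple j then -1 else 1) *
    (if t = cs.simple j * cs.simple i * cs.simple j then -1 else 1)

lemma step_apply (cs : CoxeterSystem M W) (i j : B) (t : W) (ε : ℤˣ) :
    (muPerm cs i * muPerm cs j) (t, ε) =
      ((cs.simple i * cs.simple j) * t * (cs.simple i * cs.simple j)⁻¹,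
        chi cs i j t * ε) := by
  have hc : (cs.simple j * t * cs.simple j = cs.simple i) ↔
      (t = cs.simple j * cs.simple i * cs.simple j) := by
    constructor
    · intro h
      rw [← h]
      simp [mul_assoc, cs.simple_mul_simple_cancel_left]
    · intro h; simp [h, mul_assoc, cs.simple_mul_simple_cancel_left]
  show muFun cs i (muFun cs j (t, ε)) = _
  simp only [muFun, chi, Prod.mk.injEq]
  constructor
  · simp [mul_inv_rev, cs.inv_simple, mul_assoc]
  · have hone : (cs.simple j * cs.simple i = 1) ↔ (cs.simple j = cs.simple i) := by
      rw [mul_eq_one_iff_eq_inv, cs.inv_simple]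
    have hcanc : cs.simple j * (cs.simple j * cs.simple i * cs.simple j) * cs.simple j
        = cs.simple i := by
      simp [mul_assoc, cs.simple_mul_simple_cancel_left, cs.simple_mul_simple_cancel_right]
    by_cases h1 : t = cs.simple j <;>
      by_cases h2 : t = cs.simple j * cs.simple i * cs.simple j <;>
      simp [h1, h2, hc, ← hc, hone, hcanc] <;> ring


variable (cs : CoxeterSystem M W)

lemma pow_step_apply (i j : B) (k : ℕ) (t : W) (ε : ℤˣ) :
    ((muPerm cs i * muPerm cs j) ^ k) (t, ε) =
      ((cs.simple i * cs.simple j) ^ k * t * ((cs.simple i * cs.simple j) ^ k)⁻¹,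
        (∏ l ∈ Finset.range k,
          chi cs i j ((cs.simple i * cs.simple j) ^ l * t *
            ((cs.simple i * cs.simple j) ^ l)⁻¹)) * ε) := by
  induction k with
  | zero => simp
  | succ k ih =>
      rw [pow_succ']
      have : ((muPerm cs i * muPerm cs j) * (muPerm cs i * muPerm cs j) ^ k) (t, ε)
          = (muPerm cs i * muPerm cs j) (((muPerm cs i * muPerm cs j) ^ k) (t, ε)) :=
        Equiv.Perm.mul_apply _ _ _
      rw [this, ih, step_apply]
      set p := cs.simple i * cs.simple j
      simp only [Prod.mk.injEq]
      constructor
      · rw [pow_succ']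
        group
      · rw [Finset.prod_range_succ]
        simp [mul_assoc, mul_comm, mul_left_comm]

/-- `s_j p^k = p^{-k} s_j` where `p = s_i s_j`. -/
lemma sj_pow (i j : B) (k : ℕ) :
    cs.simple j * (cs.simple i * cs.simple j) ^ k
      = ((cs.simple i * cs.simple j) ^ k)⁻¹ * cs.simple j := by
  induction k with
  | zero => simp
  | succ k ih =>
      have base : cs.simple j * (cs.simple i * cs.simple j)
          = (cs.simple i * cs.simple j)⁻¹ * cs.simple j := by
        rw [mul_inv_rev, cs.inv_simple, cs.inv_simple]
        simp [mul_assoc, cs.simple_mul_simple_cancel_left]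
      rw [pow_succ, ← mul_assoc, ih, mul_assoc, base, ← mul_assoc, ← mul_inv_rev, ← pow_succ']
      rw [pow_succ]

lemma prod_range_shift (m : ℕ) (F : ℕ → ℤˣ) (hF : ∀ l, F (l + m) = F l) (d : ℕ) :
    ∏ l ∈ Finset.range m, F (l + d) = ∏ l ∈ Finset.range m, F l := by
  induction d generalizing F with
  | zero => simp
  | succ d ih =>
      have step : ∏ l ∈ Finset.range m, F (l + 1) = ∏ l ∈ Finset.range m, F l := by
        have h1 := Finset.prod_range_succ' F m
        have h2 := Finset.prod_range_succ F m
        have h3 : F m = F 0 := by simpa using hF 0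
        rw [h2, h3] at h1
        exact (mul_right_cancel h1).symm
      have hG : ∀ l, (fun n => F (n + 1)) (l + m) = (fun n => F (n + 1)) l := by
        intro l
        simp only []
        rw [show l + m + 1 = (l + 1) + m by ring, hF]
      calc ∏ l ∈ Finset.range m, F (l + (d + 1))
          = ∏ l ∈ Finset.range m, (fun n => F (n + 1)) (l + d) := by
            apply Finset.prod_congr rfl; intro l _; simp only []; ring_nf
        _ = ∏ l ∈ Finset.range m, (fun n => F (n + 1)) l := ih (fun n => F (n + 1)) hG
        _ = ∏ l ∈ Finset.range m, F (l + 1) := rfl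
        _ = ∏ l ∈ Finset.range m, F l := step

lemma chi_conj (i j : B) (g y : W)
    (h1 : g * cs.simple j = cs.simple j * g)
    (h2 : g * (cs.simple j * cs.simple i * cs.simple j)
        = (cs.simple j * cs.simple i * cs.simple j) * g) :
    chi cs i j (g * y * g⁻¹) = chi cs i j y := by
  have key : ∀ z : W, g * z = z * g → ((g * y * g⁻¹ = z) ↔ (y = z)) := by
    intro z hz
    constructor
    · intro h
      have : g * y = z * g := by
        have := congrArg (· * g) h
        simpa [mul_assoc] using this
      rw [← hz] at this
      exact mul_left_cancel this
    · intro h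
      rw [h, hz, mul_assoc, mul_inv_cancel, mul_one]
  unfold chi
  rw [if_congr (key _ h1) rfl rfl, if_congr (key _ h2) rfl rfl]

lemma chi_prod (i j : B) (t : W) :
    ∏ l ∈ Finset.range (M i j),
      chi cs i j ((cs.simple i * cs.simple j) ^ l * t *
        ((cs.simple i * cs.simple j) ^ l)⁻¹) = 1 := by
  set p := cs.simple i * cs.simple j with hpdef
  set m := M i j with hmdef
  have hp : p ^ m = 1 := cs.simple_mul_simple_pow i j
  set c : ℕ → W := fun l => p ^ l * t * (p ^ l)⁻¹ with hcdef
  have hper : ∀ l, c (l + m) = c l := by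
    intro l
    simp only [hcdef, pow_add, hp, mul_one]
  have hconj : ∀ l d, c (l + d) = p ^ d * c l * (p ^ d)⁻¹ := by
    intro l d
    have hcm : p ^ (l + d) = p ^ d * p ^ l := by rw [pow_add, pow_mul_comm]
    simp only [hcdef, hcm, mul_inv_rev, mul_assoc]
  rcases Nat.even_or_odd m with he | ho
  · -- even case
    obtain ⟨e, he⟩ := he
    have hpe : (p ^ e)⁻¹ = p ^ e := by
      have : p ^ e * p ^ e = 1 := by rw [← pow_add, ← he, hp]
      exact inv_eq_of_mul_eq_one_right this
    have hcomm1 : p ^ e * cs.simple j = cs.simple j * p ^ e := by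
      have := sj_pow cs i j e
      rw [hpe] at this
      exact this.symm
    have hcomm2 : p ^ e * (cs.simple j * cs.simple i * cs.simple j)
        = (cs.simple j * cs.simple i * cs.simple j) * p ^ e := by
      have hsjp : cs.simple j * cs.simple i * cs.simple j = cs.simple j * p := by
        rw [hpdef, mul_assoc]
      rw [hsjp, ← mul_assoc, hcomm1, mul_assoc, mul_assoc, ← pow_succ, ← pow_succ']
    have hinv : ∀ l, chi cs i j (c (e + l)) = chi cs i j (c l) := by
      intro l
      rw [Nat.add_comm e l, hconj]
      exact chi_conj cs i j _ _ hcomm1 hcomm2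
    rw [he, Finset.prod_range_add]
    have : ∏ x ∈ Finset.range e, chi cs i j (c (e + x))
        = ∏ x ∈ Finset.range e, chi cs i j (c x) := by
      exact Finset.prod_congr rfl fun x _ => hinv x
    rw [this]
    exact Int.units_mul_self _
  · -- odd case
    obtain ⟨d', hm⟩ := ho
    set d := d' + 1 with hddef
    have h2d : p ^ (2 * d) = p := by
      have : 2 * d = m + 1 := by omega
      rw [this, pow_succ, hp, one_mul]
    have hkey1 : (p ^ d)⁻¹ * cs.simple j * p ^ d
        = cs.simple j * cs.simple i * cs.simple j := by
      have hsj := sj_pow cs i j d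
      rw [mul_assoc, hsj, ← mul_assoc, ← mul_inv_rev, ← pow_add]
      have : d + d = 2 * d := by ring
      rw [this, h2d, hpdef, mul_inv_rev, cs.inv_simple, cs.inv_simple, mul_assoc]
    have hkey : p ^ d * (cs.simple j * cs.simple i * cs.simple j) * (p ^ d)⁻¹
        = cs.simple j := by
      rw [← hkey1]
      group
    have hiff : ∀ l, (c l = cs.simple j * cs.simple i * cs.simple j) ↔
        (c (l + d) = cs.simple j) := by
      intro l
      rw [hconj]
      constructor
      · intro h; rw [h]; exact hkey
      · intro h
        have h1 : c l = (p ^ d)⁻¹ * cs.simple j * p ^ d := by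
          rw [← h]
          group
        rw [h1, hkey1]
    have hsplit : ∀ l, chi cs i j (c l) =
        (if c l = cs.simple j then (-1 : ℤˣ) else 1) *
          (if c l = cs.simple j * cs.simple i * cs.simple j then (-1 : ℤˣ) else 1) := by
      intro l; rfl
    set G : ℕ → ℤˣ := fun l => if c l = cs.simple j then (-1 : ℤˣ) else 1 with hGdef
    have hGper : ∀ l, G (l + m) = G l := by
      intro l; simp only [hGdef, hper]
    calc ∏ l ∈ Finset.range m, chi cs i j (c l)
        = (∏ l ∈ Finset.range m, G l) *
            ∏ l ∈ Finset.range m,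
              (if c l = cs.simple j * cs.simple i * cs.simple j then (-1 : ℤˣ) else 1) := by
          rw [← Finset.prod_mul_distrib]
          exact Finset.prod_congr rfl fun l _ => hsplit l
      _ = (∏ l ∈ Finset.range m, G l) * ∏ l ∈ Finset.range m, G (l + d) := by
          congr 1
          refine Finset.prod_congr rfl fun l _ => ?_
          simp only [hGdef]
          exact if_congr (hiff l) rfl rfl
      _ = (∏ l ∈ Finset.range m, G l) * ∏ l ∈ Finset.range m, G l := by
          rw [prod_range_shift m G hGper d]
      _ = 1 := Int.units_mul_self _

lemma muPerm_liftable : M.IsLiftable (fun i => muPerm cs i) := by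
  intro i j
  apply Equiv.ext
  rintro ⟨t, ε⟩
  rw [pow_step_apply, cs.simple_mul_simple_pow i j, chi_prod]
  simp

noncomputable def phi : W →* Equiv.Perm (W × ℤˣ) :=
  cs.lift ⟨fun i => muPerm cs i, muPerm_liftable cs⟩

lemma phi_simple (i : B) : phi cs (cs.simple i) = muPerm cs i :=
  cs.lift_apply_simple (muPerm_liftable cs) i

/-- The sign of `t` with respect to `w` (Bourbaki's η). -/
noncomputable def eta (w t : W) : ℤˣ := (phi cs w (t, 1)).2

lemma phi_apply : ∀ w t : W, ∀ ε : ℤˣ,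
    phi cs w (t, ε) = (w * t * w⁻¹, eta cs w t * ε) := by
  intro w
  refine cs.simple_induction_left (p := fun w => ∀ t : W, ∀ ε : ℤˣ,
    phi cs w (t, ε) = (w * t * w⁻¹, eta cs w t * ε)) w ?_ ?_
  · intro t ε
    simp [eta, map_one]
  · intro w' i ih t ε
    have hm : phi cs (cs.simple i * w') = phi cs (cs.simple i) * phi cs w' := map_mul _ _ _
    have happ : ∀ δ : ℤˣ, phi cs (cs.simple i * w') (t, δ)
        = muFun cs i (phi cs w' (t, δ)) := by
      intro δ
      rw [hm, Equiv.Perm.mul_apply, phi_simple, muPerm_apply]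
    have heta : eta cs (cs.simple i * w') t
        = (muFun cs i (w' * t * w'⁻¹, eta cs w' t)).2 := by
      unfold eta
      rw [happ 1, ih t 1, mul_one]
    rw [happ ε, ih t ε, heta]
    simp only [muFun, Prod.mk.injEq]
    constructor
    · simp [mul_inv_rev, cs.inv_simple, mul_assoc]
    · by_cases h : w' * t * w'⁻¹ = cs.simple i <;> simp [h, mul_assoc]

lemma eta_mul (u v t : W) :
    eta cs (u * v) t = eta cs u (v * t * v⁻¹) * eta cs v t := by
  have h1 : phi cs (u * v) (t, 1) = phi cs u (phi cs v (t, 1)) := by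
    rw [map_mul, Equiv.Perm.mul_apply]
  have h := congrArg Prod.snd h1
  rw [phi_apply cs v t 1, mul_one, phi_apply cs u (v * t * v⁻¹) (eta cs v t),
    phi_apply cs (u * v) t 1, mul_one] at h
  exact h

lemma eta_simple (i : B) (t : W) :
    eta cs (cs.simple i) t = if t = cs.simple i then -1 else 1 := by
  unfold eta
  rw [phi_simple, muPerm_apply]
  simp [muFun]

lemma eta_one (t : W) : eta cs 1 t = 1 := by
  unfold eta
  simp [map_one]

lemma eta_refl_self {t : W} (ht : cs.IsReflection t) : eta cs t t = -1 := by
  obtain ⟨u, i, h⟩ := ht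
  have h1 : t = u * (cs.simple i * u⁻¹) := by rw [h, mul_assoc]
  have harg1 : (cs.simple i * u⁻¹) * t * (cs.simple i * u⁻¹)⁻¹ = cs.simple i := by
    rw [h]
    simp [mul_inv_rev, cs.inv_simple, mul_assoc, cs.simple_mul_simple_cancel_left]
  have harg2 : u⁻¹ * t * u⁻¹⁻¹ = cs.simple i := by
    rw [h]
    simp [mul_assoc]
  have c1 : eta cs t t = eta cs u (cs.simple i) * eta cs (cs.simple i * u⁻¹) t := by
    nth_rewrite 1 [h1]
    rw [eta_mul, harg1]
  have c2 : eta cs (cs.simple i * u⁻¹) t = eta cs (cs.simple i) (cs.simple i) * eta cs u⁻¹ t := by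
    rw [eta_mul, harg2]
  have c3 : eta cs u (cs.simple i) * eta cs u⁻¹ t = 1 := by
    have := eta_mul cs u u⁻¹ t
    rw [harg2] at this
    rw [← this, mul_inv_cancel, eta_one]
  have c4 : eta cs (cs.simple i) (cs.simple i) = -1 := by
    rw [eta_simple]
    simp
  rw [c1, c2, c4, neg_one_mul, mul_neg, c3]

lemma eta_wordProd (ω : List B) (t : W) :
    eta cs (cs.wordProd ω) t
      = ((cs.rightInvSeq ω).map (fun x => if x = t then (-1 : ℤˣ) else 1)).prod := by
  induction ω with
  | nil => simp [eta_one]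
  | cons i ω ih =>
      have hris : cs.rightInvSeq (i :: ω)
          = ((cs.wordProd ω)⁻¹ * cs.simple i * cs.wordProd ω) :: cs.rightInvSeq ω := rfl
      rw [cs.wordProd_cons, eta_mul, ih, hris, List.map_cons, List.prod_cons]
      congr 1
      rw [eta_simple]
      have hiff : (cs.wordProd ω * t * (cs.wordProd ω)⁻¹ = cs.simple i)
          ↔ ((cs.wordProd ω)⁻¹ * cs.simple i * cs.wordProd ω = t) := by
        constructor
        · intro hh
          rw [← hh]
          group
        · intro hh
          rw [← hh]
          group
      by_cases hx : cs.wordProd ω * t * (cs.wordProd ω)⁻¹ = cs.simple i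
      · rw [if_pos hx, if_pos (hiff.mp hx)]
      · rw [if_neg hx, if_neg (fun hc => hx (hiff.mpr hc))]

lemma mem_ris_of_eta_neg {w t : W} {ω : List B} (hω : cs.IsReduced ω) (hw : w = cs.wordProd ω)
    (h : eta cs w t = -1) : t ∈ cs.rightInvSeq ω := by
  by_contra hmem
  have h1 : eta cs w t = 1 := by
    rw [hw, eta_wordProd]
    apply List.prod_eq_one
    intro x hx
    obtain ⟨y, hy, rfl⟩ := List.mem_map.mp hx
    rw [if_neg]
    intro hc
    exact hmem (hc ▸ hy)
  rw [h1] at h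
  exact absurd h (by decide)

lemma length_mul_lt_of_eta_neg {w t : W} (h : eta cs w t = -1) :
    cs.length (w * t) < cs.length w := by
  obtain ⟨ω, hred, hw⟩ := cs.exists_reduced_word' w
  have hmem : t ∈ cs.rightInvSeq ω := mem_ris_of_eta_neg cs hred hw h
  have := cs.isRightInversion_of_mem_rightInvSeq hred hmem
  rw [← hw] at this
  exact this.2

lemma eta_neg_of_length_mul_lt {w t : W} (ht : cs.IsReflection t)
    (h : cs.length (w * t) < cs.length w) : eta cs w t = -1 := by
  rcases Int.units_eq_one_or (eta cs w t) with h1 | h1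
  · exfalso
    have harg : t * t * t⁻¹ = t := by group
    have h2 : eta cs (w * t) t = -1 := by
      rw [eta_mul, harg, h1, eta_refl_self cs ht, one_mul]
    have h3 := length_mul_lt_of_eta_neg cs h2
    rw [mul_assoc, ht.mul_self, mul_one] at h3
    omega
  · exact h1

/-- Strong exchange (membership form). -/
lemma mem_rightInvSeq_of_isRightInversion {w t : W} {ω : List B}
    (hω : cs.IsReduced ω) (hw : w = cs.wordProd ω) (ht : cs.IsReflection t)
    (h : cs.length (w * t) < cs.length w) : t ∈ cs.rightInvSeq ω :=
  mem_ris_of_eta_neg cs hω hw (eta_neg_of_length_mul_lt cs ht h)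

/-- If `a` is a right inversion of `v` but not of `s_i v` (where `s_i` is a left descent
of `v`), then `a = v⁻¹ s_i v`. -/
lemma star (i : B) (v a : W) (ha : cs.IsReflection a)
    (hd : cs.length (cs.simple i * v) < cs.length v)
    (hva : cs.length (v * a) < cs.length v)
    (hnot : ¬ cs.length ((cs.simple i * v) * a) < cs.length (cs.simple i * v)) :
    a = v⁻¹ * cs.simple i * v := by
  set v₁ := cs.simple i * v with hv₁
  obtain ⟨ω₁, hred₁, hw₁⟩ := cs.exists_reduced_word' v₁
  have hv : v = cs.wordProd (i :: ω₁) := by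
    rw [cs.wordProd_cons, ← hw₁, hv₁, ← mul_assoc, cs.simple_mul_simple_self, one_mul]
  have hlen : cs.length v₁ + 1 = cs.length v := by
    rcases cs.length_simple_mul v i with h | h <;> rw [← hv₁] at h <;> omega
  have hred : cs.IsReduced (i :: ω₁) := by
    unfold CoxeterSystem.IsReduced
    rw [← hv, List.length_cons]
    rw [CoxeterSystem.IsReduced] at hred₁
    rw [← hw₁] at hred₁
    omega
  have hmem : a ∈ cs.rightInvSeq (i :: ω₁) :=
    mem_rightInvSeq_of_isRightInversion cs hred hv ha hva
  have hris : cs.rightInvSeq (i :: ω₁)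
      = ((cs.wordProd ω₁)⁻¹ * cs.simple i * cs.wordProd ω₁) :: cs.rightInvSeq ω₁ := rfl
  rw [hris, List.mem_cons] at hmem
  rcases hmem with h | h
  · rw [← hw₁] at h
    rw [h, hv₁]
    rw [mul_inv_rev, cs.inv_simple]
    simp [mul_assoc, cs.simple_mul_simple_cancel_left]
  · exfalso
    have := cs.isRightInversion_of_mem_rightInvSeq hred₁ h
    rw [← hw₁] at this
    exact hnot this.2

/-- Key dihedral lemma: if `a ≠ b` are both right inversions of `v`, then
`vab` or `vba` is shorter than `v`. -/
lemma key_lemma : ∀ n : ℕ, ∀ v a b : W, cs.length v = n →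
    cs.IsReflection a → cs.IsReflection b → a ≠ b →
    cs.length (v * a) < cs.length v → cs.length (v * b) < cs.length v →
    cs.length (v * (a * b)) < cs.length v ∨ cs.length (v * (b * a)) < cs.length v := by
  intro n
  induction n using Nat.strong_induction_on with
  | _ n ih =>
    intro v a b hn ha hb hab hva hvb
    have hv1 : v ≠ 1 := by
      intro h
      rw [h] at hva
      simp at hva
    obtain ⟨i, hi⟩ := cs.exists_leftDescent_of_ne_one hv1
    have hd : cs.length (cs.simple i * v) < cs.length v := hi
    set v₁ := cs.simple i * v with hv₁def
    have hvv₁ : v = cs.simple i * v₁ := by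
      rw [hv₁def, ← mul_assoc, cs.simple_mul_simple_self, one_mul]
    have hlen : cs.length v₁ + 1 = cs.length v := by
      rcases cs.length_simple_mul v i with h | h <;> rw [← hv₁def] at h <;> omega
    by_cases hA : cs.length (v₁ * a) < cs.length v₁
    · by_cases hB : cs.length (v₁ * b) < cs.length v₁
      · -- both descend for v₁; use induction
        rcases ih (cs.length v₁) (by omega) v₁ a b rfl ha hb hab hA hB with h | h
        · left
          have : cs.length (v * (a * b)) ≤ cs.length (v₁ * (a * b)) + 1 := by
            rw [hvv₁, mul_assoc]
            rcases cs.length_simple_mul (v₁ * (a * b)) i with hh | hh <;> omega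
          omega
        · right
          have : cs.length (v * (b * a)) ≤ cs.length (v₁ * (b * a)) + 1 := by
            rw [hvv₁, mul_assoc]
            rcases cs.length_simple_mul (v₁ * (b * a)) i with hh | hh <;> omega
          omega
      · -- b = v⁻¹ s_i v
        have hbv : b = v⁻¹ * cs.simple i * v := star cs i v b hb hd hvb hB
        right
        have : v * (b * a) = v₁ * a := by
          rw [hbv, hv₁def]
          group
        rw [this]
        omega
    · -- a = v⁻¹ s_i v
      have hav : a = v⁻¹ * cs.simple i * v := star cs i v a ha hd hva hA
      by_cases hB : cs.length (v₁ * b) < cs.length v₁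
      · left
        have : v * (a * b) = v₁ * b := by
          rw [hav, hv₁def]
          group
        rw [this]
        omega
      · exfalso
        have hbv : b = v⁻¹ * cs.simple i * v := star cs i v b hb hd hvb hB
        exact hab (hav.trans hbv.symm)

lemma reflLength_le (w : W) (l : List W) (hrefl : ∀ t ∈ l, cs.IsReflection t)
    (hprod : l.prod = w) : reflLength cs w ≤ l.length :=
  Nat.sInf_le ⟨l, hrefl, hprod, rfl⟩

lemma prod_take_append (u v : List W) (j : ℕ) :
    ((u ++ v).take j).prod = (u.take j).prod * (v.take (j - u.length)).prod := by
  rw [List.take_append, List.prod_append]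

lemma take_prod_low (u v : List W) (j : ℕ) (hj : j ≤ u.length) :
    ((u ++ v).take j).prod = (u.take j).prod := by
  rw [prod_take_append]
  have : j - u.length = 0 := by omega
  rw [this]
  simp

lemma take_prod_at (u l₂ : List W) (c d : W) :
    ((u ++ ([c, d] ++ l₂)).take (u.length + 1)).prod = u.prod * c := by
  rw [prod_take_append, List.take_of_length_le (le_of_eq rfl |>.trans (Nat.le_succ _))]
  have : u.length + 1 - u.length = 1 := by omega
  rw [this]
  simp

lemma take_prod_big (u l₂ : List W) (c d : W) (m : ℕ) :
    ((u ++ ([c, d] ++ l₂)).take (u.length + 2 + m)).prod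
      = u.prod * (c * (d * (l₂.take m).prod)) := by
  rw [prod_take_append, List.take_of_length_le (by omega)]
  have h1 : u.length + 2 + m - u.length = m + 2 := by omega
  rw [h1]
  have h2 : ([c, d] ++ l₂).take (m + 2) = c :: d :: l₂.take m := rfl
  rw [h2]
  simp [mul_assoc]

lemma surgery (x : W) (u l₂ : List W) (a b : W)
    (ha : cs.IsReflection a) (hb : cs.IsReflection b) (hab : a ≠ b)
    (h1 : cs.length (x * u.prod) < cs.length (x * u.prod * a))
    (h2 : cs.length (x * u.prod * a * b) < cs.length (x * u.prod * a)) :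
    ∃ c d : W, Relation.EqvGen HurwitzMove (u ++ ([a, b] ++ l₂)) (u ++ ([c, d] ++ l₂)) ∧
      cs.IsReflection c ∧ cs.IsReflection d ∧ c * d = a * b ∧
      cs.length (x * u.prod * c) < cs.length (x * u.prod * a) := by
  set v := x * u.prod * a with hv
  have hva : v * a = x * u.prod := by rw [hv, mul_assoc, ha.mul_self, mul_one]
  have hKL := key_lemma cs (cs.length v) v a b rfl ha hb hab (by rw [hva]; exact h1) h2
  rcases hKL with h | h
  · -- use `(b, bab)`; new midpoint is `v * (a * b)`
    refine ⟨b, b * a * b, ?_, hb, ?_, ?_, ?_⟩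
    · apply Relation.EqvGen.symm
      apply Relation.EqvGen.rel
      refine ⟨u, l₂, b, b * a * b, by simp, ?_⟩
      have hbab : b * (b * a * b) * b = a := by
        have : b * (b * a * b) * b = (b * b) * a * (b * b) := by group
        rw [this, hb.mul_self, one_mul, mul_one]
      rw [hbab]
      simp
    · have := ha.conj b
      rwa [hb.inv] at this
    · have : b * (b * a * b) = (b * b) * a * b := by group
      rw [this, hb.mul_self, one_mul]
    · have hmid : x * u.prod * b = v * (a * b) := by
        rw [← hva]
        group
      rw [hmid]
      exact h
  · -- use `(aba, a)`; new midpoint is `v * (b * a)`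
    refine ⟨a * b * a, a, ?_, ?_, ha, ?_, ?_⟩
    · exact Relation.EqvGen.rel _ _ ⟨u, l₂, a, b, by simp, by simp⟩
    · have := hb.conj a
      rwa [ha.inv] at this
    · have : a * b * a * a = a * b * (a * a) := by group
      rw [this, ha.mul_self, mul_one]
    · have hmid : x * u.prod * (a * b * a) = v * (b * a) := by
        rw [← hva]
        have : v * a * (a * b * a) = v * ((a * a) * b * a) := by group
        rw [this, ha.mul_self, one_mul, mul_assoc]
      rw [hmid]
      exact h

noncomputable def pot (x : W) (l' : List W) : ℕ :=
  ∑ j ∈ Finset.range (l'.length + 1), cs.length (x * (l'.take j).prod)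

lemma descend (x w : W) : ∀ (N : ℕ) (l' : List W),
    (∀ t ∈ l', cs.IsReflection t) → l'.prod = w → l'.length = reflLength cs w →
    pot cs x l' ≤ N →
    ∃ l'' : List W, Relation.EqvGen HurwitzMove l' l'' ∧
      (∀ t ∈ l'', cs.IsReflection t) ∧ l''.prod = w ∧ l''.length = l'.length ∧
      (∀ k, k + 2 ≤ l''.length →
        ¬(cs.length (x * (l''.take k).prod) < cs.length (x * (l''.take (k+1)).prod) ∧
          cs.length (x * (l''.take (k+2)).prod) < cs.length (x * (l''.take (k+1)).prod))) := by
  intro N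
  induction N with
  | zero =>
      intro l' hrefl hprod hlen hpot
      refine ⟨l', Relation.EqvGen.refl l', hrefl, hprod, rfl, ?_⟩
      intro k hk hcontr
      obtain ⟨hasc, hdesc⟩ := hcontr
      have hone : cs.length (x * (l'.take (k+1)).prod) ≤ pot cs x l' := by
        unfold pot
        exact Finset.single_le_sum (f := fun j => cs.length (x * (l'.take j).prod))
          (fun i _ => Nat.zero_le _)
          (Finset.mem_range.mpr (show k + 1 < l'.length + 1 by omega))
      omega
  | succ N ihN =>
      intro l' hrefl hprod hlen hpot
      by_cases hpeak : ∃ k, k + 2 ≤ l'.length ∧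
          cs.length (x * (l'.take k).prod) < cs.length (x * (l'.take (k+1)).prod) ∧
          cs.length (x * (l'.take (k+2)).prod) < cs.length (x * (l'.take (k+1)).prod)
      · obtain ⟨k, hk2, hasc, hdesc⟩ := hpeak
        have hkl : k < l'.length := by omega
        have hk1l : k + 1 < l'.length := by omega
        set u := l'.take k with hu
        set a := l'[k] with haa
        set b := l'[k+1] with hbb
        set l₂ := l'.drop (k+2) with hl₂
        have hulen : u.length = k := by
          rw [hu, List.length_take]
          omega
        have hdecomp : l' = u ++ ([a, b] ++ l₂) := by
          conv_lhs => rw [← List.take_append_drop k l']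
          congr 1
          rw [List.drop_eq_getElem_cons hkl, List.drop_eq_getElem_cons hk1l]
          rfl
        have hra : cs.IsReflection a := hrefl a (List.getElem_mem _)
        have hrb : cs.IsReflection b := hrefl b (List.getElem_mem _)
        have hQk1 : (l'.take (k+1)).prod = u.prod * a := by
          rw [List.prod_take_succ l' k hkl]
        have hQk2 : (l'.take (k+2)).prod = u.prod * a * b := by
          rw [List.prod_take_succ l' (k+1) hk1l, List.prod_take_succ l' k hkl]
        have hlen_eq : l'.length = u.length + 2 + l₂.length := by
          conv_lhs => rw [hdecomp]
          simp only [List.length_append, List.length_cons, List.length_nil]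
          omega
        have hprodw : u.prod * (a * (b * l₂.prod)) = w := by
          rw [← hprod]
          conv_rhs => rw [hdecomp]
          simp [List.prod_append, mul_assoc]
        -- a ≠ b by minimality of the factorization
        have hab : a ≠ b := by
          intro hE
          have hprod2 : (u ++ l₂).prod = w := by
            rw [List.prod_append, ← hprodw, hE, ← mul_assoc b b l₂.prod, hrb.mul_self, one_mul]
          have hle := reflLength_le cs w (u ++ l₂) (by
            intro t ht
            rcases List.mem_append.mp ht with h | h
            · exact hrefl t (List.take_subset k l' h)
            · exact hrefl t (List.drop_subset (k+2) l' h)) hprod2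
          have : (u ++ l₂).length = u.length + l₂.length := List.length_append
          omega
        rw [hQk1] at hasc hdesc
        rw [hQk2] at hdesc
        simp only [← mul_assoc] at hasc hdesc
        obtain ⟨c, d, hmove, hrc, hrd, hcd, hmid⟩ :=
          surgery cs x u l₂ a b hra hrb hab hasc hdesc
        set l'' := u ++ ([c, d] ++ l₂) with hl''
        have hrefl'' : ∀ t ∈ l'', cs.IsReflection t := by
          intro t ht
          rw [hl''] at ht
          simp only [List.mem_append, List.mem_cons, List.not_mem_nil, or_false] at ht
          rcases ht with h | (h | h) | h
          · exact hrefl t (List.take_subset k l' h)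
          · exact h ▸ hrc
          · exact h ▸ hrd
          · exact hrefl t (List.drop_subset (k+2) l' h)
        have hprod'' : l''.prod = w := by
          have h3 : l''.prod = u.prod * (c * (d * l₂.prod)) := by
            rw [hl'']
            simp [List.prod_append, List.prod_cons, mul_assoc]
          rw [h3, ← mul_assoc c d l₂.prod, hcd, mul_assoc a b l₂.prod]
          exact hprodw
        have hlen'' : l''.length = l'.length := by
          rw [hl'']
          simp only [List.length_append, List.length_cons, List.length_nil]
          omega
        -- potential strictly decreases
        have hlow : ∀ j, j ≤ k → (l''.take j).prod = (l'.take j).prod := by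
          intro j hj
          rw [hl'', take_prod_low _ _ _ (by omega)]
          conv_rhs => rw [hdecomp]
          rw [take_prod_low _ _ _ (by omega)]
        have hat' : (l''.take (k+1)).prod = u.prod * c := by
          rw [hl'', show k + 1 = u.length + 1 by omega]
          exact take_prod_at u l₂ c d
        have hbig : ∀ j, k + 2 ≤ j → (l''.take j).prod = (l'.take j).prod := by
          intro j hj
          have hj' : j = u.length + 2 + (j - (k+2)) := by omega
          rw [hl'']
          conv_rhs => rw [hdecomp]
          rw [hj', take_prod_big, take_prod_big]
          rw [← mul_assoc c d, hcd, mul_assoc a b]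
        have hpotlt : pot cs x l'' < pot cs x l' := by
          unfold pot
          rw [hlen'']
          apply Finset.sum_lt_sum
          · intro j hj
            rcases Nat.lt_trichotomy j (k+1) with h | h | h
            · rw [hlow j (by omega)]
            · subst h
              rw [hat', hQk1, ← mul_assoc, ← mul_assoc]
              exact le_of_lt hmid
            · rw [hbig j (by omega)]
          · refine ⟨k+1, Finset.mem_range.mpr (by omega), ?_⟩
            rw [hat', hQk1, ← mul_assoc, ← mul_assoc]
            exact hmid
        obtain ⟨l''', hmv3, hrefl3, hprod3, hlen3, hnopeak3⟩ :=
          ihN l'' hrefl'' hprod'' (by rw [hlen'']; exact hlen) (by omega)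
        rw [← hdecomp] at hmove
        exact ⟨l''', Relation.EqvGen.trans _ _ _ hmove hmv3, hrefl3, hprod3,
          hlen3.trans hlen'', hnopeak3⟩
      · push_neg at hpeak
        exact ⟨l', Relation.EqvGen.refl l', hrefl, hprod, rfl,
          fun k hk hc => absurd hc.2 (not_lt.mpr (hpeak k hk hc.1))⟩

end HurwitzAux

/-- Let `(W,S)` be a Coxeter system, let `w = t₁ ⋯ tₙ` be a
minimal-length factorization of `w` into reflections, and let `x ∈ W`.  Then there is a
factorization `w = t₁' ⋯ tₙ'` in the Hurwitz orbit of `(t₁, …, tₙ)` and an index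
`0 ≤ i ≤ n` such that along the path `x, x t₁', x t₁' t₂', …, x t₁' ⋯ tₙ' = x w` the
`S`-length strictly decreases for the first `i` steps and strictly increases afterwards;
moreover when `x = e` one has `i = 0` (so the lengths of the partial products strictly
increase). -/
theorem exists_hurwitz_orbit_valley_path
    {W : Type*} [Group W] {B : Type*}
    (M : CoxeterMatrix B) (cs : CoxeterSystem M W)
    (w x : W) (l : List W)
    (hrefl : ∀ t ∈ l, cs.IsReflection t) (hprod : l.prod = w)
    (hred : l.length = reflLength cs w) :
    ∃ l' : List W, Relation.EqvGen HurwitzMove l l' ∧ l'.prod = w ∧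
      ∃ i ≤ l.length,
        (∀ k < i,
          cs.length (x * (l'.take (k + 1)).prod) < cs.length (x * (l'.take k).prod)) ∧
        (∀ k, i ≤ k → k < l.length →
          cs.length (x * (l'.take k).prod) < cs.length (x * (l'.take (k + 1)).prod)) ∧
        (x = 1 → i = 0) := by
  classical
  obtain ⟨l'', hmv, hrefl'', hprod'', hlen'', hnopeak⟩ :=
    HurwitzAux.descend cs x w (HurwitzAux.pot cs x l) l hrefl hprod hred le_rfl
  refine ⟨l'', hmv, hprod'', ?_⟩
  have hne : ∀ k, k < l''.length →
      cs.length (x * (l''.take (k+1)).prod) ≠ cs.length (x * (l''.take k).prod) := by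
    intro k hk
    have hQ : (l''.take (k+1)).prod = (l''.take k).prod * l''[k] :=
      List.prod_take_succ _ _ hk
    have hr : cs.IsReflection l''[k] := hrefl'' _ (List.getElem_mem _)
    rw [hQ, ← mul_assoc]
    exact hr.length_mul_left_ne (x * (l''.take k).prod)
  have hQ0 : (x = 1) → cs.length (x * (l''.take 0).prod) = 0 := by
    intro hx
    simp [hx, cs.length_one]
  by_cases hex : ∃ k, k < l''.length ∧
      cs.length (x * (l''.take k).prod) < cs.length (x * (l''.take (k+1)).prod)
  · set i := Nat.find hex with hidef
    have hi := Nat.find_spec hex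
    have hdesc : ∀ k < i, cs.length (x * (l''.take (k + 1)).prod)
        < cs.length (x * (l''.take k).prod) := by
      intro k hk
      have hnasc := Nat.find_min hex hk
      have hklen : k < l''.length := by omega
      push_neg at hnasc
      have := hnasc hklen
      have hne' := hne k hklen
      omega
    have hasc : ∀ k, i ≤ k → k < l''.length →
        cs.length (x * (l''.take k).prod) < cs.length (x * (l''.take (k+1)).prod) := by
      intro k hik
      induction k, hik using Nat.le_induction with
      | base => intro _; exact hi.2
      | succ k hik ih =>
          intro hk1
          have h22 : k + 1 + 1 = k + 2 := by omega
          rw [h22]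
          have hk : k < l''.length := by omega
          have hak := ih hk
          have hnp := hnopeak k (by omega)
          have hne' := hne (k+1) hk1
          rw [h22] at hne'
          by_contra hcon
          exact hnp ⟨hak, by omega⟩
    refine ⟨i, by omega, hdesc, ?_, ?_⟩
    · intro k hik hk
      exact hasc k hik (by omega)
    · intro hx
      by_contra h0
      have := hdesc 0 (by omega)
      have := hQ0 hx
      omega
  · push_neg at hex
    refine ⟨l.length, le_rfl, ?_, ?_, ?_⟩
    · intro k hk
      have hklen : k < l''.length := by omega
      have := hex k hklen
      have hne' := hne k hklen
      omega
    · intro k hik hk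
      omega
    · intro hx
      by_contra h0
      have h1 : (0:ℕ) < l''.length := by omega
      have := hex 0 h1
      have hne' := hne 0 h1
      have := hQ0 hx
      omega
end

section
/- Let (W,S) be a Coxeter system with reflection set T, and let r, s ∈ T be two distinct reflections. Then the orbit of the pair (r,s) under the Hurwitz action of the braid group B_2 is exactly the set of all pairs (t1, t2) of reflections of the subgroup ⟨r,s⟩ such that t1 t2 = r s. -/
section Aux

variable {W : Type*} [Group W] {B : Type*}
  {M : CoxeterMatrix B} {cs : CoxeterSystem M W}

/-- The invariant preserved by Hurwitz moves. -/
def HurwitzInv (cs : CoxeterSystem M W) (r s : W) (l : List W) : Prop :=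
  (∀ x ∈ l, cs.IsReflection x ∧ x ∈ Subgroup.closure {r, s}) ∧ l.prod = r * s

theorem hurwitzInv_iff {r s : W} {l l' : List W} (h : HurwitzMove l l') :
    HurwitzInv cs r s l ↔ HurwitzInv cs r s l' := by
  obtain ⟨l₁, l₂, a, b, rfl, rfl⟩ := h
  constructor
  · rintro ⟨hall, hprod⟩
    obtain ⟨ha, hamem⟩ := hall a (by simp)
    obtain ⟨hb, hbmem⟩ := hall b (by simp)
    have haa : a * a = 1 := ha.mul_self
    refine ⟨?_, ?_⟩
    · intro x hx
      simp only [List.mem_append, List.mem_cons, List.mem_singleton] at hx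
      rcases hx with (hx | (rfl | (rfl | hx))) | hx
      · exact hall x (by simp [hx])
      · refine ⟨?_, mul_mem (mul_mem hamem hbmem) hamem⟩
        have h2 : a * b * a = a * b * a⁻¹ := by rw [ha.inv]
        rw [h2]; exact hb.conj a
      · exact ⟨ha, hamem⟩
      · exact absurd hx List.not_mem_nil
      · exact hall x (by simp [hx])
    · rw [← hprod]
      simp only [List.prod_append, List.prod_cons, List.prod_nil]
      congr 1
      rw [mul_one, mul_one]
      congr 1
      rw [mul_assoc (a * b) a a, haa, mul_one]
  · rintro ⟨hall, hprod⟩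
    obtain ⟨hc, hcmem⟩ := hall (a * b * a) (by simp)
    obtain ⟨ha, hamem⟩ := hall a (by simp)
    have haa : a * a = 1 := ha.mul_self
    have hb : b = a * (a * b * a) * a⁻¹ := by
      rw [ha.inv]
      calc b = (a * a) * b * (a * a) := by rw [haa, one_mul, mul_one]
      _ = a * (a * b * a) * a := by group
    refine ⟨?_, ?_⟩
    · intro x hx
      simp only [List.mem_append, List.mem_cons, List.mem_singleton] at hx
      rcases hx with (hx | (rfl | (rfl | hx))) | hx
      · exact hall x (by simp [hx])
      · exact ⟨ha, hamem⟩
      · refine ⟨?_, ?_⟩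
        · rw [hb]; exact hc.conj a
        · rw [hb, ha.inv]; exact mul_mem (mul_mem hamem hcmem) hamem
      · exact absurd hx List.not_mem_nil
      · exact hall x (by simp [hx])
    · rw [← hprod]
      simp only [List.prod_append, List.prod_cons, List.prod_nil]
      congr 1
      rw [mul_one, mul_one]
      congr 1
      rw [mul_assoc (a * b) a a, haa, mul_one]

theorem hurwitzInv_eqvGen {r s : W} {l l' : List W}
    (h : Relation.EqvGen HurwitzMove l l') :
    HurwitzInv cs r s l ↔ HurwitzInv cs r s l' := by
  induction h with
  | rel _ _ h => exact hurwitzInv_iff h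
  | refl => exact Iff.rfl
  | symm _ _ _ ih => exact ih.symm
  | trans _ _ _ _ _ ih₁ ih₂ => exact ih₁.trans ih₂

theorem conj_r_zpow {r s : W} (hr : cs.IsReflection r) (hs : cs.IsReflection s)
    (k : ℤ) : r * (r * s) ^ k * r = (r * s) ^ (-k) := by
  have h1 : r * (r * s) * r⁻¹ = (r * s)⁻¹ := by
    rw [hr.inv, mul_inv_rev, hr.inv, hs.inv]
    calc r * (r * s) * r = (r * r) * (s * r) := by group
    _ = s * r := by rw [hr.mul_self, one_mul]
  have h2 : r * (r * s) ^ k * r⁻¹ = (r * s) ^ (-k) := by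
    calc r * (r * s) ^ k * r⁻¹ = (r * (r * s) * r⁻¹) ^ k := by rw [conj_zpow]
    _ = (r * s) ^ (-k) := by rw [h1, zpow_neg, inv_zpow]
  rw [hr.inv] at h2; exact h2

theorem mem_closure_form {r s : W} (hr : cs.IsReflection r) (hs : cs.IsReflection s)
    {x : W} (hx : x ∈ Subgroup.closure {r, s}) :
    ∃ k : ℤ, x = (r * s) ^ k ∨ x = (r * s) ^ k * r := by
  have key : ∀ k : ℤ, r * (r * s) ^ k = (r * s) ^ (-k) * r := by
    intro k
    calc r * (r * s) ^ k = (r * (r * s) ^ k * r) * r := by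
          rw [mul_assoc, hr.mul_self, mul_one]
    _ = (r * s) ^ (-k) * r := by rw [conj_r_zpow hr hs]
  induction hx using Subgroup.closure_induction with
  | mem x hx =>
    rcases hx with rfl | rfl
    · exact ⟨0, Or.inr (by rw [zpow_zero, one_mul])⟩
    · refine ⟨-1, Or.inr ?_⟩
      rw [zpow_neg_one, mul_inv_rev, hr.inv, hs.inv, mul_assoc, hr.mul_self, mul_one]
  | one => exact ⟨0, Or.inl (by rw [zpow_zero])⟩
  | mul x y _ _ hx hy =>
    obtain ⟨k, hk | hk⟩ := hx <;> obtain ⟨m, hm | hm⟩ := hy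
    · exact ⟨k + m, Or.inl (by rw [hk, hm, zpow_add])⟩
    · exact ⟨k + m, Or.inr (by rw [hk, hm, ← mul_assoc, ← zpow_add])⟩
    · refine ⟨k + -m, Or.inr ?_⟩
      rw [hk, hm, mul_assoc, key m, ← mul_assoc, ← zpow_add]
    · refine ⟨k + -m, Or.inl ?_⟩
      rw [hk, hm, ← mul_assoc, mul_assoc _ r _, key m, ← mul_assoc, mul_assoc,
        hr.mul_self, mul_one, ← zpow_add]
  | inv x _ hx =>
    obtain ⟨k, hk | hk⟩ := hx
    · exact ⟨-k, Or.inl (by rw [hk, ← zpow_neg])⟩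
    · refine ⟨k, Or.inr ?_⟩
      rw [hk, mul_inv_rev, hr.inv, ← zpow_neg, key (-k), neg_neg]

theorem reach_aux {r s : W} (hr : cs.IsReflection r) (hs : cs.IsReflection s) (k : ℤ) :
    HurwitzMove [(r * s) ^ k * r, (r * s) ^ (k - 1) * r]
      [(r * s) ^ (k + 1) * r, (r * s) ^ k * r] := by
  refine ⟨[], [], (r * s) ^ k * r, (r * s) ^ (k - 1) * r, by simp, ?_⟩
  have hab : ((r * s) ^ k * r) * ((r * s) ^ (k - 1) * r) = r * s := by
    calc ((r * s) ^ k * r) * ((r * s) ^ (k - 1) * r)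
        = (r * s) ^ k * (r * (r * s) ^ (k - 1) * r) := by group
    _ = (r * s) ^ k * (r * s) ^ (-(k - 1)) := by rw [conj_r_zpow hr hs]
    _ = r * s := by
        rw [← zpow_add, show (k + -(k - 1)) = (1 : ℤ) by ring, zpow_one]
  have habc : ((r * s) ^ k * r) * ((r * s) ^ (k - 1) * r) * ((r * s) ^ k * r)
      = (r * s) ^ (k + 1) * r := by
    rw [hab, show (k + 1) = 1 + k by ring, zpow_add, zpow_one]
    group
  rw [habc]
  simp

theorem reach {r s : W} (hr : cs.IsReflection r) (hs : cs.IsReflection s) (k : ℤ) :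
    Relation.EqvGen HurwitzMove [r, s] [(r * s) ^ k * r, (r * s) ^ (k - 1) * r] := by
  induction k using Int.induction_on with
  | zero =>
    have h1 : ((r * s) : W) ^ (0 : ℤ) * r = r := by rw [zpow_zero, one_mul]
    have h2 : ((r * s) : W) ^ ((0 : ℤ) - 1) * r = s := by
      rw [zero_sub, zpow_neg_one, mul_inv_rev, hr.inv, hs.inv, mul_assoc, hr.mul_self,
        mul_one]
    rw [h1, h2]
    exact Relation.EqvGen.refl _
  | succ n ih =>
    refine Relation.EqvGen.trans _ _ _ ih ?_
    have h := reach_aux (cs := cs) hr hs n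
    rw [show ((n : ℤ) + 1 - 1) = (n : ℤ) by ring]
    exact Relation.EqvGen.rel _ _ h
  | pred n ih =>
    refine Relation.EqvGen.trans _ _ _ ih ?_
    refine Relation.EqvGen.symm _ _ (Relation.EqvGen.rel _ _ ?_)
    have h := reach_aux (cs := cs) hr hs (-(n : ℤ) - 1)
    rw [show (-(n : ℤ) - 1 + 1) = -(n : ℤ) by ring] at h
    rw [show (-(n : ℤ) - 1 - 1) = (-(n : ℤ) - 1) - 1 by ring] at h ⊢
    exact h

theorem parity_reflection {t : W} (ht : cs.IsReflection t) :
    cs.lengthParity t = Multiplicative.ofAdd 1 := by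
  rw [cs.lengthParity_eq_ofAdd_length]
  obtain ⟨n, hn⟩ := ht.odd_length
  rw [hn]
  push_cast
  congr 1
  rw [show ((2 : ZMod 2)) = 0 from rfl]
  ring

end Aux

/-- Let `(W,S)` be a Coxeter system with reflection set `T` and let
`r ≠ s` be two reflections.  The `B₂`-Hurwitz orbit of the pair `(r, s)` is exactly the
set of pairs `(t₁, t₂)` of reflections of the subgroup `⟨r, s⟩` with `t₁ t₂ = r s`. -/
theorem hurwitz_orbit_pair_eq
    {W : Type*} [Group W] {B : Type*}
    (M : CoxeterMatrix B) (cs : CoxeterSystem M W)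
    (r s : W) (hr : cs.IsReflection r) (hs : cs.IsReflection s) (hrs : r ≠ s)
    (t₁ t₂ : W) :
    Relation.EqvGen HurwitzMove [r, s] [t₁, t₂] ↔
      cs.IsReflection t₁ ∧ t₁ ∈ Subgroup.closure {r, s} ∧
      cs.IsReflection t₂ ∧ t₂ ∈ Subgroup.closure {r, s} ∧
      t₁ * t₂ = r * s := by
  constructor
  · intro h
    have hst : HurwitzInv cs r s [r, s] := by
      refine ⟨?_, by simp⟩
      intro x hx
      simp only [List.mem_cons, List.mem_singleton, List.not_mem_nil, or_false] at hx
      rcases hx with rfl | rfl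
      · exact ⟨hr, Subgroup.subset_closure (by simp)⟩
      · exact ⟨hs, Subgroup.subset_closure (by simp)⟩
    obtain ⟨hall, hprod⟩ := (hurwitzInv_eqvGen (cs := cs) h).mp hst
    obtain ⟨h1, h1m⟩ := hall t₁ (by simp)
    obtain ⟨h2, h2m⟩ := hall t₂ (by simp)
    simp only [List.prod_cons, List.prod_nil, mul_one] at hprod
    exact ⟨h1, h1m, h2, h2m, hprod⟩
  · rintro ⟨ht₁, hm₁, ht₂, hm₂, hprod⟩
    obtain ⟨k, hk | hk⟩ := mem_closure_form hr hs hm₁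
    · exfalso
      have hodd : cs.lengthParity t₁ = Multiplicative.ofAdd 1 :=
        parity_reflection ht₁
      have heven : cs.lengthParity t₁ = 1 := by
        rw [hk, map_zpow, map_mul, parity_reflection hr, parity_reflection hs,
          show (Multiplicative.ofAdd (1 : ZMod 2) * Multiplicative.ofAdd 1) = 1 from rfl,
          one_zpow]
      rw [hodd] at heven
      exact (by decide : (Multiplicative.ofAdd (1 : ZMod 2)) ≠ 1) heven
    · have ht2 : t₂ = (r * s) ^ (k - 1) * r := by
        have h3 : t₂ = t₁⁻¹ * (r * s) := by rw [← hprod]; group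
        rw [ht₁.inv] at h3
        rw [h3, hk]
        calc (r * s) ^ k * r * (r * s)
            = (r * s) ^ k * ((r * r) * s) := by group
        _ = (r * s) ^ k * s := by rw [hr.mul_self, one_mul]
        _ = (r * s) ^ k * ((r * s)⁻¹ * r) := by
              rw [mul_inv_rev, mul_assoc s⁻¹ r⁻¹ r, inv_mul_cancel, mul_one, hs.inv]
        _ = (r * s) ^ (k - 1) * r := by
              rw [← zpow_neg_one, ← mul_assoc, ← zpow_add, show (k + -1) = k - 1 by ring]
      rw [hk, ht2]
      exact reach hr hs k
end

section
/- Let (W,S) be a Coxeter system of finite rank with reflection set T and length functions ℓ (with respect to S) and ℓ_T (with respect to T). Let c ∈ W with ℓ(c) = ℓ_T(c) = n, and let c = t1⋯tn be a factorization into reflections such that ℓ(t1⋯t_k) < ℓ(t1⋯t_{k+1}) for all 0 ≤ k < n. Then ℓ(t1⋯t_k) = ℓ_T(t1⋯t_k) = k for every 0 ≤ k ≤ n. -/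
/-- Let `(W,S)` be a Coxeter system of finite rank, let `c ∈ W` with
`ℓ(c) = ℓ_T(c) = n`, and let `c = t₁ ⋯ tₙ` be a factorization into reflections whose
partial products are strictly increasing in `S`-length.  Then
`ℓ(t₁ ⋯ t_k) = ℓ_T(t₁ ⋯ t_k) = k` for every `0 ≤ k ≤ n`. -/
theorem partial_products_length_eq
    {W : Type*} [Group W] {B : Type*} [Finite B]
    (M : CoxeterMatrix B) (cs : CoxeterSystem M W)
    (c : W) (n : ℕ) (hlen : cs.length c = n) (hreflLen : reflLength cs c = n)
    (l : List W) (hl : l.length = n)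
    (hrefl : ∀ t ∈ l, cs.IsReflection t) (hprod : l.prod = c)
    (hinc : ∀ k < n, cs.length ((l.take k).prod) < cs.length ((l.take (k + 1)).prod)) :
    ∀ k ≤ n, cs.length ((l.take k).prod) = k ∧ reflLength cs ((l.take k).prod) = k := by
  set f : ℕ → ℕ := fun k => cs.length ((l.take k).prod) with hf
  have hfn : f n = n := by
    have h1 : l.take n = l := by rw [← hl]; exact List.take_length (l := l)
    simp only [hf, h1, hprod, hlen]
  have hadd : ∀ j k, k + j ≤ n → f k + j ≤ f (k + j) := by
    intro j
    induction j with
    | zero => intro k _; simp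
    | succ j ih =>
      intro k hkj
      have h1 : f k + j ≤ f (k + j) := ih k (by omega)
      have h2 : f (k + j) < f (k + j + 1) := hinc (k + j) (by omega)
      have heq : k + (j + 1) = k + j + 1 := by omega
      rw [heq]; omega
  intro k hk
  have hlow : k ≤ f k := by
    have := hadd k 0 (by omega)
    simpa [hf, List.take_zero] using this
  have hhigh : f k ≤ k := by
    have := hadd (n - k) k (by omega)
    rw [show k + (n - k) = n by omega, hfn] at this
    omega
  have hfk : f k = k := le_antisymm hhigh hlow
  refine ⟨hfk, ?_⟩
  -- reflection length part
  have hmem : k ∈ {m | ∃ l' : List W, (∀ t ∈ l', cs.IsReflection t) ∧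
      l'.prod = (l.take k).prod ∧ l'.length = m} := by
    exact ⟨l.take k, fun t ht => hrefl t (List.mem_of_mem_take ht), rfl, by
      simp [List.length_take]; omega⟩
  have hge : ∀ m ∈ {m | ∃ l' : List W, (∀ t ∈ l', cs.IsReflection t) ∧
      l'.prod = (l.take k).prod ∧ l'.length = m}, k ≤ m := by
    rintro m ⟨l', hl'refl, hl'prod, hl'len⟩
    have hcmem : m + (n - k) ∈ {m | ∃ l'' : List W, (∀ t ∈ l'', cs.IsReflection t) ∧
        l''.prod = c ∧ l''.length = m} := by
      refine ⟨l' ++ l.drop k, ?_, ?_, ?_⟩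
      · intro t ht
        rcases List.mem_append.mp ht with h | h
        · exact hl'refl t h
        · exact hrefl t (List.mem_of_mem_drop h)
      · rw [List.prod_append, hl'prod, ← List.prod_append, List.take_append_drop, hprod]
      · simp [List.length_drop, hl'len, hl]
    have := Nat.sInf_le hcmem
    rw [reflLength] at hreflLen
    omega
  rw [reflLength]
  exact le_antisymm (Nat.sInf_le hmem) (le_csInf ⟨k, hmem⟩ hge)
end
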